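/- Let A_0 be the (r-1)×(r-1) symmetric matrix with [A_0]_{ii} = 1 and [A_0]_{ij} = r²/(√((r-i)²+r²)√((r-j)²+r²)) for i ≠ j. Then det(A_0) = (Σ_{k=1}^r (r!/k)²) / ∏_{k=1}^{r-1}((r-k)² + r²). -/

import Mathlib

open Finset Matrix

lemma det_diag_add_outer {n : ℕ} (d u : Fin n → ℝ) (hd : ∀ i, d i ≠ 0) :
    (Matrix.diagonal d + Matrix.replicateCol Unit u * Matrix.replicateRow Unit u).det
      = (∏ i, d i) * (1 + ∑ i, u i ^ 2 / d i) := by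
  have hdet : IsUnit (Matrix.diagonal d).det := by
    rw [Matrix.det_diagonal]
    exact (Finset.prod_ne_zero_iff.2 fun i _ => hd i).isUnit
  have hinv : (Matrix.diagonal d)⁻¹ = Matrix.diagonal (fun i => (d i)⁻¹) := by
    refine Matrix.inv_eq_right_inv ?_
    rw [Matrix.diagonal_mul_diagonal]
    have : (fun i => d i * (d i)⁻¹) = fun _ => (1 : ℝ) :=
      funext fun i => mul_inv_cancel₀ (hd i)
    rw [this, Matrix.diagonal_one]
  rw [Matrix.det_add_replicateCol_mul_replicateRow hdet, Matrix.det_diagonal]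
  congr 1
  rw [Matrix.det_unique, hinv]
  simp only [Matrix.add_apply, Matrix.one_apply_eq, Matrix.mul_apply,
    Matrix.mul_diagonal, Matrix.replicateRow_apply, Matrix.replicateCol_apply, Matrix.diagonal_apply,
    Finset.sum_ite_eq, Finset.mem_univ, if_true, mul_ite, mul_zero, Finset.sum_ite_eq']
  congr 1
  refine Finset.sum_congr rfl fun i _ => ?_
  rw [pow_two, div_eq_mul_inv]
  ring

/-- Let `A₀` be the `(r-1)×(r-1)` symmetric matrix with `[A₀]ᵢᵢ = 1` and
`[A₀]ᵢⱼ = r²/(√((r-i)²+r²)√((r-j)²+r²))` for `i ≠ j`. Then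
`det A₀ = (∑_{k=1}^r (r!/k)²) / ∏_{k=1}^{r-1}((r-k)² + r²)`. -/
theorem stmt_13 (r : ℕ) (hr : 2 ≤ r) :
    Matrix.det (Matrix.of fun i j : Fin (r - 1) =>
      if i = j then (1 : ℝ)
      else (r : ℝ) ^ 2
        / (Real.sqrt (((r : ℝ) - ((i : ℕ) + 1)) ^ 2 + (r : ℝ) ^ 2)
          * Real.sqrt (((r : ℝ) - ((j : ℕ) + 1)) ^ 2 + (r : ℝ) ^ 2)))
      = (∑ k ∈ Finset.Icc 1 r, ((Nat.factorial r : ℝ) / (k : ℝ)) ^ 2)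
        / ∏ k ∈ Finset.Icc 1 (r - 1), (((r : ℝ) - (k : ℝ)) ^ 2 + (r : ℝ) ^ 2) := by
  obtain ⟨n, rfl⟩ : ∃ n, r = n + 2 := ⟨r - 2, by omega⟩
  clear hr
  show Matrix.det (Matrix.of fun i j : Fin (n + 1) =>
      if i = j then (1 : ℝ)
      else ((n+2:ℕ) : ℝ) ^ 2
        / (Real.sqrt ((((n+2:ℕ):ℝ) - ((i : ℕ) + 1)) ^ 2 + ((n+2:ℕ):ℝ) ^ 2)
          * Real.sqrt ((((n+2:ℕ):ℝ) - ((j : ℕ) + 1)) ^ 2 + ((n+2:ℕ):ℝ) ^ 2)))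
      = (∑ k ∈ Finset.Icc 1 (n+2), ((Nat.factorial (n+2) : ℝ) / (k : ℝ)) ^ 2)
        / ∏ k ∈ Finset.Icc 1 (n + 1), ((((n+2:ℕ):ℝ) - (k : ℝ)) ^ 2 + ((n+2:ℕ):ℝ) ^ 2)
  set N : ℝ := ((n + 2 : ℕ) : ℝ) with hN
  have hNpos : (0:ℝ) < N := by positivity
  set c : Fin (n + 1) → ℝ := fun i => N - ((i : ℕ) + 1) with hcdef
  set x : Fin (n + 1) → ℝ := fun i => c i ^ 2 + N ^ 2 with hxdef
  have hc : ∀ i : Fin (n + 1), c i = ((n + 1 - (i : ℕ) : ℕ) : ℝ) := by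
    intro i
    have hi : (i : ℕ) ≤ n := Nat.lt_succ_iff.mp i.isLt
    rw [hcdef]
    rw [Nat.cast_sub (by omega : (i:ℕ) ≤ n + 1), hN]
    push_cast
    ring
  have hcpos : ∀ i, 0 < c i := by
    intro i
    rw [hc i]
    have hi : (i : ℕ) ≤ n := Nat.lt_succ_iff.mp i.isLt
    have : 1 ≤ n + 1 - (i : ℕ) := by omega
    exact_mod_cast Nat.lt_of_lt_of_le Nat.zero_lt_one this
  have hxpos : ∀ i, 0 < x i := fun i => by
    have := hcpos i; rw [hxdef]; positivity
  set d : Fin (n + 1) → ℝ := fun i => c i ^ 2 / x i with hddef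
  set u : Fin (n + 1) → ℝ := fun i => N / Real.sqrt (x i) with hudef
  have hd : ∀ i, d i ≠ 0 := fun i =>
    div_ne_zero (pow_ne_zero _ (hcpos i).ne') (hxpos i).ne'
  have hA : (Matrix.of fun i j : Fin (n + 1) =>
      if i = j then (1 : ℝ)
      else N ^ 2
        / (Real.sqrt ((N - ((i : ℕ) + 1)) ^ 2 + N ^ 2)
          * Real.sqrt ((N - ((j : ℕ) + 1)) ^ 2 + N ^ 2)))
      = Matrix.diagonal d + Matrix.replicateCol Unit u * Matrix.replicateRow Unit u := by
    ext i j
    have hmul : (Matrix.replicateCol Unit u * Matrix.replicateRow Unit u) i j = u i * u j := by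
      simp [Matrix.mul_apply]
    rcases eq_or_ne i j with rfl | hij
    · simp only [Matrix.of_apply, if_pos rfl, Matrix.add_apply,
        Matrix.diagonal_apply_eq, hmul]
      rw [hudef]
      simp only
      rw [div_mul_div_comm, Real.mul_self_sqrt (hxpos i).le, ← pow_two,
        hddef]
      simp only
      rw [← add_div, hxdef]
      simp only
      exact (div_self (hxpos i).ne').symm
    · simp only [Matrix.of_apply, if_neg hij, Matrix.add_apply,
        Matrix.diagonal_apply_ne _ hij, hmul, zero_add]
      rw [hudef]
      simp only
      rw [div_mul_div_comm, ← pow_two, hxdef, hcdef]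
  rw [hA, det_diag_add_outer d u hd]
  -- rewrite the summand
  have hu2 : ∀ i, u i ^ 2 / d i = N ^ 2 / c i ^ 2 := by
    intro i
    rw [hudef, hddef]
    simp only
    rw [div_pow, Real.sq_sqrt (hxpos i).le]
    have h1 := (hxpos i).ne'
    have h2 := (hcpos i).ne'
    field_simp
  have hsum : (∑ i, u i ^ 2 / d i) = ∑ i, N ^ 2 / c i ^ 2 :=
    Finset.sum_congr rfl fun i _ => hu2 i
  have hprodd : (∏ i, d i) = (∏ i, c i ^ 2) / (∏ i, x i) := by
    rw [hddef]; exact Finset.prod_div_distrib _ _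
  rw [hsum, hprodd, div_mul_eq_mul_div]
  -- denominator
  have hden : (∏ k ∈ Icc 1 (n+1), ((N - (k:ℝ)) ^ 2 + N ^ 2)) = ∏ i : Fin (n+1), x i := by
    rw [← Finset.Ico_add_one_right_eq_Icc, Finset.prod_Ico_eq_prod_range]
    simp only [Nat.add_sub_cancel]
    rw [← Fin.prod_univ_eq_prod_range (fun m => (N - ((1 + m : ℕ) : ℝ)) ^ 2 + N ^ 2) (n + 1)]
    refine Finset.prod_congr rfl fun i _ => ?_
    rw [hxdef, hcdef]
    simp only
    push_cast
    ring_nf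
  -- product of c
  have hprodc : (∏ i : Fin (n+1), c i) = ((Nat.factorial (n+1) : ℕ) : ℝ) := by
    have e1 : (∏ i : Fin (n+1), c i)
        = ((∏ i ∈ range (n+1), (n + 1 - i) : ℕ) : ℝ) := by
      rw [Nat.cast_prod, ← Fin.prod_univ_eq_prod_range (fun i => ((n + 1 - i : ℕ) : ℝ)) (n+1)]
      exact Finset.prod_congr rfl fun i _ => hc i
    rw [e1]
    congr 1
    calc ∏ i ∈ range (n+1), (n + 1 - i)
        = ∏ i ∈ range (n+1), (n + 1 - 1 - i + 1) := by
          refine Finset.prod_congr rfl fun i hi => ?_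
          rw [Finset.mem_range] at hi; omega
      _ = ∏ i ∈ range (n+1), (i + 1) := Finset.prod_range_reflect (fun j => j + 1) (n+1)
      _ = Nat.factorial (n+1) := Finset.prod_range_add_one_eq_factorial (n+1)
  -- sum of N^2/c^2 reindexed
  have hsumc : (∑ i : Fin (n+1), N ^ 2 / c i ^ 2)
      = ∑ k ∈ Icc 1 (n+1), N ^ 2 / (k : ℝ) ^ 2 := by
    have e1 : (∑ i : Fin (n+1), N ^ 2 / c i ^ 2)
        = ∑ i ∈ range (n+1), N ^ 2 / ((n + 1 - i : ℕ) : ℝ) ^ 2 := by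
      rw [← Fin.sum_univ_eq_sum_range (fun i => N ^ 2 / ((n + 1 - i : ℕ) : ℝ) ^ 2) (n+1)]
      exact Finset.sum_congr rfl fun i _ => by rw [hc i]
    have e2 : (∑ i ∈ range (n+1), N ^ 2 / ((n + 1 - i : ℕ) : ℝ) ^ 2)
        = ∑ i ∈ range (n+1), N ^ 2 / ((i + 1 : ℕ) : ℝ) ^ 2 := by
      rw [← Finset.sum_range_reflect (fun j => N ^ 2 / ((j + 1 : ℕ) : ℝ) ^ 2) (n+1)]
      refine Finset.sum_congr rfl fun i hi => ?_
      rw [Finset.mem_range] at hi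
      congr 3
      omega
    rw [e1, e2, ← Finset.Ico_add_one_right_eq_Icc, Finset.sum_Ico_eq_sum_range]
    refine Finset.sum_congr rfl fun i _ => ?_
    congr 2
    push_cast
    ring
  -- numerator identity
  have hnum : (∏ i, c i ^ 2) * (1 + ∑ i : Fin (n+1), N ^ 2 / c i ^ 2)
      = ∑ k ∈ Icc 1 (n+2), ((Nat.factorial (n+2) : ℝ) / (k : ℝ)) ^ 2 := by
    rw [Finset.prod_pow, hprodc, hsumc,
      Finset.sum_Icc_succ_top (by omega : 1 ≤ n + 2),
      mul_add, mul_one, Finset.mul_sum, add_comm]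
    have hfact : (Nat.factorial (n+2) : ℝ) = ((n+2 : ℕ) : ℝ) * (Nat.factorial (n+1) : ℝ) := by
      rw [show Nat.factorial (n+2) = (n+2) * Nat.factorial (n+1) from rfl]
      push_cast
      ring
    congr 1
    · refine Finset.sum_congr rfl fun k hk => ?_
      rw [Finset.mem_Icc] at hk
      have hk0 : (k : ℝ) ≠ 0 := by
        have : 1 ≤ k := hk.1
        positivity
      rw [hfact, hN]
      field_simp
    · have h2 : ((n:ℝ) + 1 + 1) ≠ 0 := by positivity
      rw [hfact]
      push_cast
      field_simp
      ring
  rw [hnum, hden]
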